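/- Let g : ℝ^n → ℝ ∪ {∞} be proper and lower semicontinuous, and let h : ℝ^n → ℝ be continuous, convex, and 1-coercive. If liminf over ‖z‖ → ∞ of g(z)/h(z) is greater than −∞, then there exists r ∈ ℝ such that g + r·h is bounded below on ℝ^n. -/
import Mathlib


open Filter

/-- A lower semicontinuous EReal-valued function that is never `⊥` is bounded
below by a real constant on a compact set. -/
lemma lsc_bddBelow_on_compact {α : Type*} [TopologicalSpace α]
    {g : α → EReal} (hg : LowerSemicontinuous g) (hg_nbot : ∀ x, g x ≠ ⊥)
    {K : Set α} (hK : IsCompact K) : ∃ c : ℝ, ∀ x ∈ K, (c : EReal) ≤ g x := by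
  -- For each x in K, pick a real below g x and an open nbhd where g stays above it
  have key : ∀ x ∈ K, ∃ a : ℝ, ∀ᶠ y in nhds x, (a : EReal) < g y := by
    intro x _
    obtain ⟨a, -, ha2⟩ := EReal.lt_iff_exists_real_btwn.mp
      (bot_lt_iff_ne_bot.mpr (hg_nbot x))
    exact ⟨a, hg x a ha2⟩
  choose! a ha using key
  -- open cover
  obtain ⟨t, hcov⟩ := hK.elim_nhds_subcover'
    (fun x _ => {y | (a x : EReal) < g y}) (fun x hx => ha x hx)
  by_cases hne : t.Nonempty
  · obtain ⟨c, hc⟩ := t.exists_min_image (fun x => a x.1) hne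
    refine ⟨a c.1, fun x hx => ?_⟩
    obtain ⟨y, hy, hxy⟩ := Set.mem_iUnion₂.mp (hcov hx)
    calc ((a c.1 : ℝ) : EReal) ≤ (a y.1 : ℝ) := by
          exact_mod_cast hc.2 y hy
      _ ≤ g x := le_of_lt hxy
  · refine ⟨0, fun x hx => absurd (hcov hx) ?_⟩
    simp [Finset.not_nonempty_iff_eq_empty.mp hne]

theorem stmt_4 {n : ℕ} (g : EuclideanSpace ℝ (Fin n) → EReal)
    (h : EuclideanSpace ℝ (Fin n) → ℝ)
    (hg_nbot : ∀ x, g x ≠ ⊥) (hg_proper : ∃ x, g x ≠ ⊤)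
    (hg_lsc : LowerSemicontinuous g)
    (hh_cont : Continuous h) (hhconv : ConvexOn ℝ Set.univ h)
    (hcoer : Tendsto (fun z : EuclideanSpace ℝ (Fin n) => h z / ‖z‖)
      (comap (fun z : EuclideanSpace ℝ (Fin n) => ‖z‖) atTop) atTop)
    (hliminf : ⊥ < liminf (fun z => g z / (h z : EReal))
      (comap (fun z : EuclideanSpace ℝ (Fin n) => ‖z‖) atTop)) :
    ∃ r c : ℝ, ∀ x, (c : EReal) ≤ g x + (r * h x : ℝ) := by
  set F := comap (fun z : EuclideanSpace ℝ (Fin n) => ‖z‖) atTop with hF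
  -- pick a real m below the liminf
  obtain ⟨m, -, hm⟩ := EReal.lt_iff_exists_real_btwn.mp hliminf
  -- eventually g z / h z > m
  have hev1 : ∀ᶠ z in F, (m : EReal) < g z / (h z : EReal) :=
    eventually_lt_of_lt_liminf hm
  -- eventually h z ≥ ‖z‖ ≥ 1
  have hev2 : ∀ᶠ z in F, (1 : ℝ) ≤ h z / ‖z‖ := hcoer.eventually_ge_atTop 1
  have hev3 : ∀ᶠ z in F, (1 : ℝ) ≤ ‖z‖ :=
    (tendsto_comap (f := fun z : EuclideanSpace ℝ (Fin n) => ‖z‖)).eventually_ge_atTop 1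
  have hev : ∀ᶠ z in F, (m : EReal) < g z / (h z : EReal) ∧ (1:ℝ) ≤ h z / ‖z‖ ∧ (1:ℝ) ≤ ‖z‖ :=
    hev1.and (hev2.and hev3)
  rw [hF, eventually_comap, eventually_atTop] at hev
  obtain ⟨R, hR⟩ := hev
  -- the compact ball
  obtain ⟨c₀, hc₀⟩ := lsc_bddBelow_on_compact hg_lsc hg_nbot
    (isCompact_closedBall (0 : EuclideanSpace ℝ (Fin n)) R)
  obtain ⟨M, hM⟩ := (isCompact_closedBall (0 : EuclideanSpace ℝ (Fin n)) R).exists_bound_of_continuousOn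
    hh_cont.continuousOn
  refine ⟨-m, min 0 (c₀ - |(-m)| * M), fun x => ?_⟩
  by_cases hx : ‖x‖ ≤ R
  · -- inside the ball
    have hx' : x ∈ Metric.closedBall (0 : EuclideanSpace ℝ (Fin n)) R := by
      simpa [Metric.mem_closedBall, dist_eq_norm] using hx
    have h1 : (c₀ : EReal) ≤ g x := hc₀ x hx'
    have h2 : (-(|(-m)| * M) : ℝ) ≤ -m * h x := by
      have hMx := hM x hx'
      rw [Real.norm_eq_abs] at hMx
      have : |(-m) * h x| ≤ |(-m)| * M := by
        rw [abs_mul]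
        exact mul_le_mul_of_nonneg_left hMx (abs_nonneg _)
      linarith [neg_abs_le ((-m) * h x)]
    calc ((min 0 (c₀ - |(-m)| * M) : ℝ) : EReal) ≤ ((c₀ - |(-m)| * M : ℝ) : EReal) := by
          exact_mod_cast min_le_right _ _
      _ = (c₀ : EReal) + ((-(|(-m)| * M) : ℝ) : EReal) := by
          rw [← EReal.coe_add]; ring_nf
      _ ≤ g x + ((-m * h x : ℝ) : EReal) :=
          add_le_add h1 (by exact_mod_cast h2)
  · -- outside: ‖x‖ ≥ R
    obtain ⟨hgx, hhx1, hhx2⟩ := hR ‖x‖ (le_of_not_ge hx) x rfl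
    have hnorm_pos : (0:ℝ) < ‖x‖ := lt_of_lt_of_le one_pos hhx2
    have hhpos : (1:ℝ) ≤ h x := by
      have := (div_le_iff₀ hnorm_pos).mp (le_refl (h x / ‖x‖))
      calc (1:ℝ) ≤ ‖x‖ := hhx2
        _ = 1 * ‖x‖ := (one_mul _).symm
        _ ≤ (h x / ‖x‖) * ‖x‖ := by
            exact mul_le_mul_of_nonneg_right hhx1 (le_of_lt hnorm_pos)
        _ = h x := by field_simp
    have hhpos' : (0:EReal) < (h x : EReal) := by exact_mod_cast lt_of_lt_of_le one_pos hhpos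
    have hne : ((h x : ℝ) : EReal) ≠ ⊤ := EReal.coe_ne_top _
    have hmul : (m : EReal) * (h x : EReal) ≤ g x :=
      (EReal.le_div_iff_mul_le hhpos' hne).mp (le_of_lt hgx)
    have hmul' : ((m * h x : ℝ) : EReal) ≤ g x := by
      rw [EReal.coe_mul]; exact hmul
    calc ((min 0 (c₀ - |(-m)| * M) : ℝ) : EReal) ≤ ((0:ℝ) : EReal) := by
          exact_mod_cast min_le_left _ _
      _ = ((m * h x : ℝ) : EReal) + ((-m * h x : ℝ) : EReal) := by
          rw [← EReal.coe_add]; norm_cast; ring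
      _ ≤ g x + ((-m * h x : ℝ) : EReal) := add_le_add hmul' (le_refl _)
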